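/- Suppose f : ℝ → ℝ is continuous, f(0) = 0, and there exist γ₀ > 0 and 0 < α₀ < 1 such that f(r)/r^{α₀} → -γ₀ as r → 0+. Let y : [0,1] → ℝ be a C¹ solution of y'(r) = -2(c·√(y(r)⁺) + f(r)) with y(0) = 0 and y > 0 on (0,1), and let z(U) = ∫_{s₀}^{U} dr/√(y(r)). Then the limit z₀ := lim_{U→0+} z(U) is finite, i.e., ∫_0^{s₀} dr/√(y(r)) < ∞. -/

import Mathlib

open Filter Set MeasureTheory

theorem stmt_9 (f : ℝ → ℝ) (c γ₀ α₀ s₀ : ℝ) (y : ℝ → ℝ)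
    (hf : Continuous f) (hf0 : f 0 = 0)
    (hγ₀ : 0 < γ₀) (hα₀ : 0 < α₀) (hα₀1 : α₀ < 1)
    (hasym : Tendsto (fun r => f r / r ^ α₀) (nhdsWithin 0 (Ioi 0)) (nhds (-γ₀)))
    (hs₀ : 0 < s₀) (hs₀1 : s₀ < 1)
    (hy : ContDiffOn ℝ 1 y (Icc 0 1)) (hy0 : y 0 = 0)
    (hypos : ∀ r ∈ Ioo (0:ℝ) 1, 0 < y r)
    (hode : ∀ r ∈ Ioo (0:ℝ) 1,
      deriv y r = -2 * (c * Real.sqrt (max (y r) 0) + f r)) :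
    IntegrableOn (fun r => 1 / Real.sqrt (y r)) (Ioo 0 s₀) := by
  have hycont : ContinuousOn y (Icc 0 1) := hy.continuousOn
  set p : ℝ := 1 + α₀ with hp
  have hp1 : (1:ℝ) ≤ p := by simp [hp]; linarith
  have hppos : (0:ℝ) < p := by linarith
  set K : ℝ := γ₀ / (2 * p) with hKdef
  have hKpos : 0 < K := by positivity
  have hKe : K * p = γ₀ / 2 := by
    rw [hKdef, div_mul_eq_mul_div, div_eq_div_iff (by positivity) (by norm_num)]; ring
  -- step A: f r < -(γ₀/2) * r^α₀ for small positive r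
  have h1 : ∀ᶠ r in nhdsWithin 0 (Ioi 0), f r / r ^ α₀ < -(γ₀/2) :=
    hasym.eventually_lt_const (by linarith)
  rw [(nhdsGT_basis (0:ℝ)).eventually_iff] at h1
  obtain ⟨δ₁, hδ₁pos, hδ₁⟩ := h1
  have hfbound : ∀ r : ℝ, 0 < r → r < δ₁ → f r < -(γ₀/2) * r ^ α₀ := by
    intro r hr hrδ
    have := hδ₁ ⟨hr, hrδ⟩
    have hrp : (0:ℝ) < r ^ α₀ := Real.rpow_pos_of_pos hr _
    calc f r = (f r / r ^ α₀) * r ^ α₀ := by field_simp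
    _ < -(γ₀/2) * r ^ α₀ := by
        exact mul_lt_mul_of_pos_right this hrp
  -- step B: choose δ₂ controlling the sqrt term
  set A : ℝ := 2 * |c| * Real.sqrt K + 1 with hAdef
  have hApos : 0 < A := by positivity
  set δ₂ : ℝ := min 1 ((γ₀ / (2 * A)) ^ (2 / (1 - α₀))) with hδ₂def
  have hδ₂pos : 0 < δ₂ := by
    apply lt_min one_pos
    apply Real.rpow_pos_of_pos
    positivity
  have hδ₂bound : ∀ r : ℝ, 0 < r → r ≤ δ₂ → r ^ ((1 - α₀)/2) ≤ γ₀ / (2 * A) := by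
    intro r hr hrδ
    have h2 : r ^ ((1 - α₀)/2) ≤ δ₂ ^ ((1 - α₀)/2) :=
      Real.rpow_le_rpow hr.le hrδ (by linarith)
    refine h2.trans ?_
    have h3 : δ₂ ≤ (γ₀ / (2 * A)) ^ (2 / (1 - α₀)) := min_le_right _ _
    have h4 : δ₂ ^ ((1 - α₀)/2) ≤ ((γ₀ / (2 * A)) ^ (2 / (1 - α₀))) ^ ((1 - α₀)/2) :=
      Real.rpow_le_rpow hδ₂pos.le h3 (by linarith)
    refine h4.trans_eq ?_
    rw [← Real.rpow_mul (by positivity)]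
    have hne : (1:ℝ) - α₀ ≠ 0 := by linarith
    rw [show (2 / (1 - α₀)) * ((1 - α₀)/2) = 1 by
      rw [div_mul_div_comm, mul_comm (1 - α₀) 2]; exact div_self (by positivity)]
    exact Real.rpow_one _
  -- the comparison interval
  set δ : ℝ := min (min δ₁ δ₂) s₀ with hδdef
  have hδpos : 0 < δ := lt_min (lt_min hδ₁pos hδ₂pos) hs₀
  have hδs₀ : δ ≤ s₀ := min_le_right _ _
  have hδ1 : δ < 1 := lt_of_le_of_lt hδs₀ hs₀1
  -- the comparison function
  set φ : ℝ → ℝ := fun r => K * r ^ p with hφdef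
  have hφcont : Continuous φ := by
    apply Continuous.mul continuous_const
    exact Real.continuous_rpow_const hppos.le
  have hφderiv : ∀ x : ℝ, HasDerivAt φ (K * (p * x ^ (p - 1))) x := fun x =>
    (Real.hasDerivAt_rpow_const (Or.inr hp1)).const_mul K
  -- key estimate on deriv y at points where y ≤ φ
  have hkey : ∀ x : ℝ, 0 < x → x < δ → y x ≤ φ x → K * (p * x ^ (p - 1)) < deriv y x := by
    intro x hx0 hxδ hyφ
    have hx1 : x < 1 := hxδ.trans hδ1
    have hxI : x ∈ Ioo (0:ℝ) 1 := ⟨hx0, hx1⟩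
    have hyx : 0 < y x := hypos x hxI
    have hmax : max (y x) 0 = y x := max_eq_left hyx.le
    have hfx : f x < -(γ₀/2) * x ^ α₀ :=
      hfbound x hx0 (hxδ.trans_le ((min_le_left _ _).trans (min_le_left _ _)))
    -- sqrt bound
    have hsq : Real.sqrt (y x) ≤ Real.sqrt K * x ^ (p/2) := by
      have : Real.sqrt (y x) ≤ Real.sqrt (K * x ^ p) := Real.sqrt_le_sqrt hyφ
      refine this.trans_eq ?_
      rw [Real.sqrt_mul hKpos.le, Real.sqrt_eq_rpow (x ^ p),
        ← Real.rpow_mul hx0.le, mul_one_div]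
    have hxsplit : x ^ (p/2) = x ^ α₀ * x ^ ((1 - α₀)/2) := by
      rw [← Real.rpow_add hx0]
      congr 1
      simp [hp]; ring
    have hδ₂x : x ^ ((1 - α₀)/2) ≤ γ₀ / (2 * A) :=
      hδ₂bound x hx0 (le_of_lt (hxδ.trans_le ((min_le_left _ _).trans (min_le_right _ _))))
    have hxα : (0:ℝ) < x ^ α₀ := Real.rpow_pos_of_pos hx0 _
    -- bound the c * sqrt term
    have hcterm : 2 * (c * Real.sqrt (y x)) ≤ (γ₀/2) * x ^ α₀ := by
      have h1 : 2 * (c * Real.sqrt (y x)) ≤ 2 * |c| * Real.sqrt (y x) := by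
        have : c * Real.sqrt (y x) ≤ |c| * Real.sqrt (y x) :=
          mul_le_mul_of_nonneg_right (le_abs_self c) (Real.sqrt_nonneg _)
        nlinarith
      refine h1.trans ?_
      have h2 : 2 * |c| * Real.sqrt (y x) ≤ 2 * |c| * (Real.sqrt K * x ^ (p/2)) :=
        mul_le_mul_of_nonneg_left hsq (by positivity)
      refine h2.trans ?_
      rw [hxsplit]
      have h3 : 2 * |c| * Real.sqrt K * x ^ ((1 - α₀)/2) ≤ A * (γ₀ / (2 * A)) := by
        have hb : 2 * |c| * Real.sqrt K ≤ A := by simp only [hAdef]; linarith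
        have hnn : (0:ℝ) ≤ 2 * |c| * Real.sqrt K := by positivity
        calc 2 * |c| * Real.sqrt K * x ^ ((1 - α₀)/2)
            ≤ A * x ^ ((1 - α₀)/2) :=
              mul_le_mul_of_nonneg_right hb (by positivity)
          _ ≤ A * (γ₀ / (2 * A)) := mul_le_mul_of_nonneg_left hδ₂x hApos.le
      have h4 : A * (γ₀ / (2 * A)) = γ₀ / 2 := by field_simp
      calc 2 * |c| * (Real.sqrt K * (x ^ α₀ * x ^ ((1 - α₀)/2)))
          = (2 * |c| * Real.sqrt K * x ^ ((1 - α₀)/2)) * x ^ α₀ := by ring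
        _ ≤ (A * (γ₀ / (2 * A))) * x ^ α₀ :=
            mul_le_mul_of_nonneg_right h3 hxα.le
        _ = (γ₀/2) * x ^ α₀ := by rw [h4]
    have hxpm : x ^ (p - 1) = x ^ α₀ := by norm_num [hp]
    rw [hode x hxI, hmax, hxpm, ← mul_assoc, hKe]
    nlinarith
  -- step B conclusion: y r ≥ K r^p on (0, δ)
  have hlow : ∀ r : ℝ, 0 < r → r < δ → K * r ^ p ≤ y r := by
    intro r₁ hr₁0 hr₁δ
    by_contra hcon
    push_neg at hcon
    set g : ℝ → ℝ := fun r => y r - φ r with hgdef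
    have hgcont : ContinuousOn g (Icc 0 1) :=
      hycont.sub (hφcont.continuousOn)
    set S : Set ℝ := Icc 0 r₁ ∩ g ⁻¹' (Ici 0) with hSdef
    have hr₁1 : r₁ ≤ 1 := le_of_lt (hr₁δ.trans hδ1)
    have hSsub : Icc 0 r₁ ⊆ Icc 0 1 := Icc_subset_Icc le_rfl hr₁1
    have hSclosed : IsClosed S :=
      (hgcont.mono hSsub).preimage_isClosed_of_isClosed isClosed_Icc isClosed_Ici
    have h0S : (0:ℝ) ∈ S := by
      constructor
      · exact ⟨le_rfl, hr₁0.le⟩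
      · simp only [mem_preimage, mem_Ici, hgdef, hφdef]
        rw [hy0, Real.zero_rpow (by positivity)]
        simp
    have hSne : S.Nonempty := ⟨0, h0S⟩
    have hSbdd : BddAbove S := ⟨r₁, fun x hx => hx.1.2⟩
    set r₀ : ℝ := sSup S with hr₀def
    have hr₀S : r₀ ∈ S := hSclosed.csSup_mem hSne hSbdd
    have hr₀0 : 0 ≤ r₀ := hr₀S.1.1
    have hr₀r₁' : r₀ ≤ r₁ := hr₀S.1.2
    have hgr₁ : g r₁ < 0 := by simp [hgdef, hφdef]; linarith
    have hgr₀ : 0 ≤ g r₀ := hr₀S.2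
    have hr₀r₁ : r₀ < r₁ := lt_of_le_of_ne hr₀r₁' (fun h => by rw [h] at hgr₀; linarith)
    -- on (r₀, r₁], g < 0
    have hneg : ∀ x ∈ Ioc r₀ r₁, g x < 0 := by
      intro x hx
      by_contra hcx
      push_neg at hcx
      have hxS : x ∈ S := ⟨⟨hr₀0.trans hx.1.le, hx.2⟩, hcx⟩
      exact absurd (le_csSup hSbdd hxS) (not_le.mpr hx.1)
    -- derivative positive on (r₀, r₁)
    have hder : ∀ x ∈ interior (Icc r₀ r₁), 0 < deriv g x := by
      rw [interior_Icc]
      intro x hx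
      have hx0 : 0 < x := lt_of_le_of_lt hr₀0 hx.1
      have hxδ : x < δ := hx.2.trans hr₁δ
      have hx1 : x < 1 := hxδ.trans hδ1
      have hyφx : y x ≤ φ x := by
        have := hneg x ⟨hx.1, hx.2.le⟩
        simp only [hgdef] at this; linarith
      have hdy : DifferentiableAt ℝ y x := by
        have := (hy.differentiableOn one_ne_zero).differentiableAt
          (Icc_mem_nhds hx0 hx1)
        exact this
      have hg' : HasDerivAt g (deriv y x - K * (p * x ^ (p - 1))) x :=
        hdy.hasDerivAt.sub (hφderiv x)
      rw [hg'.deriv]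
      have := hkey x hx0 hxδ hyφx
      linarith
    have hmono : StrictMonoOn g (Icc r₀ r₁) :=
      strictMonoOn_of_deriv_pos (convex_Icc _ _)
        (hgcont.mono (Icc_subset_Icc hr₀0 hr₁1)) hder
    have := hmono (left_mem_Icc.mpr hr₀r₁.le) (right_mem_Icc.mpr hr₀r₁.le) hr₀r₁
    linarith
  -- step C: integrability
  have hsub : Ioo (0:ℝ) s₀ ⊆ Ioo 0 δ ∪ Ico δ s₀ := by
    intro x hx
    rcases lt_or_ge x δ with h | h
    · exact Or.inl ⟨hx.1, h⟩
    · exact Or.inr ⟨h, hx.2⟩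
  refine IntegrableOn.mono_set ?_ hsub
  apply IntegrableOn.union
  · -- on Ioo 0 δ : dominated by (√K)⁻¹ * r^(-(p/2))
    have hint : IntegrableOn (fun r : ℝ => (Real.sqrt K)⁻¹ * r ^ (-(p/2))) (Ioo 0 δ) := by
      apply Integrable.const_mul
      exact (intervalIntegral.integrableOn_Ioo_rpow_iff hδpos).mpr
        (by simp only [hp]; linarith)
    apply Integrable.mono' hint
    · -- measurability
      apply ContinuousOn.aestronglyMeasurable _ measurableSet_Ioo
      intro x hx
      have hx1 : x ∈ Ioo (0:ℝ) 1 := ⟨hx.1, hx.2.trans hδ1⟩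
      have hyx : 0 < y x := hypos x hx1
      have hc : ContinuousWithinAt y (Ioo 0 δ) x :=
        (hycont.mono (fun z hz => ⟨hz.1.le, (hz.2.trans hδ1).le⟩)) x hx
      have : ContinuousWithinAt (fun r => Real.sqrt (y r)) (Ioo 0 δ) x :=
        Real.continuous_sqrt.continuousAt.comp_continuousWithinAt hc
      exact (continuousWithinAt_const.div this (by positivity))
    · -- a.e. bound
      filter_upwards [ae_restrict_mem measurableSet_Ioo] with x hx
      have hx1 : x ∈ Ioo (0:ℝ) 1 := ⟨hx.1, hx.2.trans hδ1⟩
      have hyx : 0 < y x := hypos x hx1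
      have hlb : K * x ^ p ≤ y x := hlow x hx.1 hx.2
      have hxp : (0:ℝ) < x ^ p := Real.rpow_pos_of_pos hx.1 _
      have hsq : Real.sqrt K * x ^ (p/2) ≤ Real.sqrt (y x) := by
        have h1 : Real.sqrt (K * x ^ p) ≤ Real.sqrt (y x) := Real.sqrt_le_sqrt hlb
        refine le_trans (le_of_eq ?_) h1
        rw [Real.sqrt_mul hKpos.le, Real.sqrt_eq_rpow (x ^ p),
          ← Real.rpow_mul hx.1.le, mul_one_div]
      have hsqpos : 0 < Real.sqrt K * x ^ (p/2) := by
        have := Real.sqrt_pos.mpr hKpos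
        have := Real.rpow_pos_of_pos hx.1 (p/2)
        positivity
      have h2 : (1:ℝ) / Real.sqrt (y x) ≤ 1 / (Real.sqrt K * x ^ (p/2)) :=
        one_div_le_one_div_of_le hsqpos hsq
      rw [Real.norm_eq_abs, abs_of_nonneg (by positivity)]
      refine h2.trans (le_of_eq ?_)
      rw [one_div, mul_inv, Real.rpow_neg hx.1.le]
  · -- on Ico δ s₀ : continuous on compact
    have hIccsub : Icc δ s₀ ⊆ Icc 0 1 :=
      Icc_subset_Icc hδpos.le hs₀1.le
    have hcont : ContinuousOn (fun r => 1 / Real.sqrt (y r)) (Icc δ s₀) := by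
      intro x hx
      have hx1 : x ∈ Ioo (0:ℝ) 1 := ⟨lt_of_lt_of_le hδpos hx.1, lt_of_le_of_lt hx.2 hs₀1⟩
      have hyx : 0 < y x := hypos x hx1
      have hc : ContinuousWithinAt y (Icc δ s₀) x := (hycont.mono hIccsub) x hx
      have : ContinuousWithinAt (fun r => Real.sqrt (y r)) (Icc δ s₀) x :=
        Real.continuous_sqrt.continuousAt.comp_continuousWithinAt hc
      exact continuousWithinAt_const.div this (by positivity)
    exact (hcont.integrableOn_Icc).mono_set Ico_subset_Icc_self
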